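/- In the transitive tournament on n ≥ 3 vertices v_1,...,v_n (with arcs v_i → v_j whenever i < j), every vertex belongs to every monitoring arc-geodetic set; hence its monitoring arc-geodetic number is n, and consequently mag^+(K_n) = n. -/
import Mathlib


namespace MAG

variable {V : Type*}

/-- Directed walk from `x` to `y` whose list of visited vertices is `l`. -/
inductive DWalk (A : V → V → Prop) : V → V → List V → Prop
  | nil (v : V) : DWalk A v v [v]
  | cons {u v w : V} {l : List V} (h : A u v) (p : DWalk A v w l) :
      DWalk A u w (u :: l)

/-- The arc `(a, b)` lies on the walk with vertex list `l`. -/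
def ArcOn (a b : V) (l : List V) : Prop :=
  ∃ l₁ l₂ : List V, l = l₁ ++ a :: b :: l₂

/-- `l` is (the vertex list of) a shortest directed walk from `x` to `y`. -/
def IsShortest (A : V → V → Prop) (x y : V) (l : List V) : Prop :=
  DWalk A x y l ∧ ∀ l' : List V, DWalk A x y l' → l.length ≤ l'.length

/-- `x` and `y` monitor the arc `(a, b)`: the arc lies on every shortest
directed path from `x` to `y` (and such a path exists), or symmetrically
from `y` to `x`. -/
def Monitors (A : V → V → Prop) (x y a b : V) : Prop :=
  ((∃ l, IsShortest A x y l) ∧ ∀ l, IsShortest A x y l → ArcOn a b l) ∨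
  ((∃ l, IsShortest A y x l) ∧ ∀ l, IsShortest A y x l → ArcOn a b l)

/-- A monitoring arc-geodetic set of the digraph `A`. -/
def IsMAGSet (A : V → V → Prop) (M : Set V) : Prop :=
  ∀ a b : V, A a b → ∃ x ∈ M, ∃ y ∈ M, x ≠ y ∧ Monitors A x y a b

/-- The monitoring arc-geodetic number of the digraph `A`. -/
noncomputable def mag (A : V → V → Prop) [Fintype V] : ℕ :=
  sInf {n | ∃ M : Finset V, IsMAGSet A (M : Set V) ∧ M.card = n}

/-- `A` is an orientation of the undirected simple graph `G`. -/
structure IsOrientation (G : SimpleGraph V) (A : V → V → Prop) : Prop where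
  adj_iff : ∀ u v : V, G.Adj u v ↔ (A u v ∨ A v u)
  asymm : ∀ u v : V, A u v → ¬ A v u

/-- The lower monitoring arc-geodetic number of `G`. -/
noncomputable def magMinus (G : SimpleGraph V) [Fintype V] : ℕ :=
  sInf {n | ∃ A : V → V → Prop, IsOrientation G A ∧ mag A = n}

/-- The upper monitoring arc-geodetic number of `G`. -/
noncomputable def magPlus (G : SimpleGraph V) [Fintype V] : ℕ :=
  sSup {n | ∃ A : V → V → Prop, IsOrientation G A ∧ mag A = n}

/-- A source: a vertex with no in-neighbours. -/
def IsSource (A : V → V → Prop) (v : V) : Prop := ∀ w, ¬ A w v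

/-- A sink: a vertex with no out-neighbours. -/
def IsSink (A : V → V → Prop) (v : V) : Prop := ∀ w, ¬ A v w

/-- An oriented graph: no loops and no pair of opposite arcs. -/
def IsOrientedGraph (A : V → V → Prop) : Prop :=
  (∀ v, ¬ A v v) ∧ ∀ u v : V, A u v → ¬ A v u

/-- The underlying undirected graph of `A` is connected. -/
def IsConnectedDigraph (A : V → V → Prop) : Prop :=
  ∀ x y : V, Relation.ReflTransGen (fun a b => A a b ∨ A b a) x y


section Aux

variable {n : ℕ}

lemma dwalk_le {x y : Fin n} {l} (h : DWalk (fun i j : Fin n => i < j) x y l) :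
    x ≤ y := by
  induction h with
  | nil => exact le_refl _
  | cons h p ih => exact le_trans h.le ih

lemma dwalk_len_pos {A : V → V → Prop} {x y : V} {l} (h : DWalk A x y l) :
    1 ≤ l.length := by
  cases h <;> simp

lemma dwalk_len_one {A : V → V → Prop} {x y : V} {l} (h : DWalk A x y l)
    (hl : l.length = 1) : x = y := by
  cases h with
  | nil => rfl
  | cons h p => simp only [List.length_cons] at hl; have := dwalk_len_pos p; omega

lemma dwalk_len_two {A : V → V → Prop} {x y : V} {l} (h : DWalk A x y l)
    (hl : l.length = 2) : l = [x, y] := by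
  cases h with
  | nil => simp at hl
  | cons hA p =>
    cases p with
    | nil => rfl
    | cons h2 p2 => have := dwalk_len_pos p2; simp only [List.length_cons] at hl; omega

lemma shortest_iff {x y : Fin n} (hxy : x < y) {l} :
    IsShortest (fun i j : Fin n => i < j) x y l ↔ l = [x, y] := by
  constructor
  · rintro ⟨hw, hmin⟩
    have h2 : l.length ≤ 2 := hmin [x, y] (DWalk.cons hxy (DWalk.nil y))
    have h1 := dwalk_len_pos hw
    have hlen : l.length = 2 := by
      rcases Nat.lt_or_ge l.length 2 with h | h
      · have : l.length = 1 := by omega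
        exact absurd (dwalk_len_one hw this) hxy.ne
      · omega
    exact dwalk_len_two hw hlen
  · rintro rfl
    refine ⟨DWalk.cons hxy (DWalk.nil y), ?_⟩
    intro l' hl'
    have h1 := dwalk_len_pos hl'
    by_contra h
    push_neg at h
    have : l'.length = 1 := by simp at h ⊢; omega
    exact hxy.ne (dwalk_len_one hl' this)

lemma monitors_mem {x y a b : Fin n} (hxy : x ≠ y) (hab : a < b)
    (h : Monitors (fun i j : Fin n => i < j) x y a b) :
    (a = x ∧ b = y) ∨ (a = y ∧ b = x) := by
  have key : ∀ u v : Fin n, u ≠ v →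
      ((∃ l, IsShortest (fun i j : Fin n => i < j) u v l) ∧
        ∀ l, IsShortest (fun i j : Fin n => i < j) u v l → ArcOn a b l) →
      a = u ∧ b = v := by
    intro u v huv ⟨⟨l, hl⟩, hall⟩
    have hle : u ≤ v := dwalk_le hl.1
    have hlt : u < v := lt_of_le_of_ne hle huv
    obtain ⟨l₁, l₂, heq⟩ := hall [u, v] ((shortest_iff hlt).2 rfl)
    have hlen := congrArg List.length heq
    simp [List.length_append] at hlen
    have h1 : l₁ = [] := List.eq_nil_of_length_eq_zero (by omega)
    have h2 : l₂ = [] := List.eq_nil_of_length_eq_zero (by omega)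
    subst h1; subst h2
    simp at heq
    exact ⟨heq.1.symm, heq.2.symm⟩
  rcases h with h | h
  · exact Or.inl (key x y hxy h)
  · exact Or.inr (key y x hxy.symm h)

lemma univ_isMAG : IsMAGSet (fun i j : Fin n => i < j) (Set.univ) := by
  intro a b hab
  refine ⟨a, trivial, b, trivial, hab.ne, Or.inl
    ⟨⟨[a, b], (shortest_iff hab).2 rfl⟩, ?_⟩⟩
  intro l hl
  rw [shortest_iff hab] at hl
  exact ⟨[], [], by simp [hl]⟩

lemma endpoints_mem {M : Set (Fin n)} (hM : IsMAGSet (fun i j : Fin n => i < j) M)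
    {a b : Fin n} (hab : a < b) : a ∈ M ∧ b ∈ M := by
  obtain ⟨x, hx, y, hy, hxy, hmon⟩ := hM a b hab
  rcases monitors_mem hxy hab hmon with ⟨rfl, rfl⟩ | ⟨rfl, rfl⟩
  · exact ⟨hx, hy⟩
  · exact ⟨hy, hx⟩

lemma magSet_univ (hn : 3 ≤ n) {M : Set (Fin n)}
    (hM : IsMAGSet (fun i j : Fin n => i < j) M) : M = Set.univ := by
  ext v
  simp only [Set.mem_univ, iff_true]
  obtain ⟨w, hw⟩ := Fintype.exists_ne_of_one_lt_card (by simp; omega) v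
  rcases hw.lt_or_gt with h | h
  · exact (endpoints_mem hM h).2
  · exact (endpoints_mem hM h).1

lemma mag_tt_eq (hn : 3 ≤ n) : mag (fun i j : Fin n => i < j) = n := by
  unfold mag
  have hset : {m | ∃ M : Finset (Fin n),
      IsMAGSet (fun i j : Fin n => i < j) (M : Set (Fin n)) ∧ M.card = m} = {n} := by
    ext m
    simp only [Set.mem_setOf_eq, Set.mem_singleton_iff]
    constructor
    · rintro ⟨M, hM, rfl⟩
      have h1 := magSet_univ hn hM
      have h2 : M = Finset.univ := by
        apply Finset.coe_injective; simp [h1]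
      simp [h2]
    · rintro rfl
      exact ⟨Finset.univ, by simpa using univ_isMAG, by simp⟩
  rw [hset, csInf_singleton]

lemma mag_le_n (A : Fin n → Fin n → Prop) : mag A ≤ n := by
  unfold mag
  rcases Set.eq_empty_or_nonempty
      {m | ∃ M : Finset (Fin n), IsMAGSet A (M : Set (Fin n)) ∧ M.card = m} with h | h
  · rw [h, Nat.sInf_empty]; omega
  · obtain ⟨m, M, hM, hcard⟩ := h
    have h1 : sInf {m | ∃ M : Finset (Fin n), IsMAGSet A (M : Set (Fin n)) ∧ M.card = m} ≤ m :=
      Nat.sInf_le ⟨M, hM, hcard⟩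
    have h2 : m ≤ n := by
      rw [← hcard]
      simpa using Finset.card_le_univ M
    omega

end Aux

/-- in the transitive tournament on `n ≥ 3` vertices, every
vertex belongs to every MAG-set; hence its `mag` is `n` and
`mag⁺(K_n) = n`. -/
theorem transitiveTournament_mag_eq_card (n : ℕ) (hn : 3 ≤ n) :
    (∀ M : Set (Fin n),
      IsMAGSet (fun i j : Fin n => i < j) M → M = Set.univ) ∧
    mag (fun i j : Fin n => i < j) = n ∧
    magPlus (⊤ : SimpleGraph (Fin n)) = n := by
  refine ⟨fun M hM => magSet_univ hn hM, mag_tt_eq hn, ?_⟩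
  have horient : IsOrientation (⊤ : SimpleGraph (Fin n)) (fun i j : Fin n => i < j) := by
    constructor
    · intro u v
      simp only [SimpleGraph.top_adj]
      exact ⟨fun h => h.lt_or_gt, fun h => by rcases h with h | h; exacts [h.ne, h.ne']⟩
    · intro u v h
      exact lt_asymm h
  have hmem : n ∈ {m | ∃ A : Fin n → Fin n → Prop,
      IsOrientation (⊤ : SimpleGraph (Fin n)) A ∧ mag A = m} :=
    ⟨fun i j : Fin n => i < j, horient, mag_tt_eq hn⟩
  have hub : ∀ m ∈ {m | ∃ A : Fin n → Fin n → Prop,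
      IsOrientation (⊤ : SimpleGraph (Fin n)) A ∧ mag A = m}, m ≤ n := by
    rintro m ⟨A, _, rfl⟩
    exact mag_le_n A
  exact le_antisymm (csSup_le ⟨n, hmem⟩ hub) (le_csSup ⟨n, hub⟩ hmem)

end MAG
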